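/- There is no two-point numerical flux F = (Fρ, Fρv, Fρe), assigning to every pair of admissible states (ρ₋, v₋, p₋), (ρ₊, v₊, p₊) (with ρ± > 0, p± > 0) a vector in ℝ³, that simultaneously satisfies: (i) consistency, i.e. F(u, u) = f(u) = (ρv, ρv² + p, (ρe + p)v) for every state u; (ii) entropy conservation in the sense of Tadmor for some member of Harten's one-parameter family of entropies with parameter α (α > 0 or α < −γ), i.e. ⟦w⟧·F − ⟦ψ⟧ = 0 for all pairs of states; (iii) pressure equilibrium preservation, i.e. there exist functions c₁(p, v) and c₂(p, v) such that whenever the two states share the same velocity v and pressure p, Fρv = v·Fρ + c₁(p, v) and Fρe = (1/2)v²·Fρ + c₂(p, v); and (iv) a density component Fρ that does not depend on the pressures p₋, p₊ (i.e. Fρ is a function of ρ₋, ρ₊, v₋, v₊ only). -/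

import Mathlib

/-!
Nonexistence of a two-point numerical flux for the 1D compressible Euler
equations (ideal gas, ratio of specific heats `γ > 1`) that is simultaneously
consistent, entropy conservative (in the sense of Tadmor) for a member of
Harten's one-parameter family of entropies with parameter `α` (`α > 0` or
`α < -γ`), pressure equilibrium preserving, and has a density flux independent
of the pressure.

A state is a triple `(ρ, v, p)` with `ρ > 0`, `p > 0`; the conserved variables
are `u = (ρ, ρv, ρe)` with `ρe = p/(γ-1) + ρ v²/2` and physical flux
`f(u) = (ρv, ρv² + p, (ρe + p)v)`. The entropy variables and flux potential for
Harten's entropy `U = -((γ+α)/(γ-1)) ρ (p/ρ^γ)^(1/(α+γ))` are given below.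
-/

/-- First component of the entropy variables for Harten's entropy. -/
noncomputable def hartenW1 (γ α ρ v p : ℝ) : ℝ :=
  ρ / p * (p / ρ ^ γ) ^ (1 / (α + γ)) * (-(α / (γ - 1)) * (p / ρ) - v ^ 2 / 2)

/-- Second component of the entropy variables for Harten's entropy. -/
noncomputable def hartenW2 (γ α ρ v p : ℝ) : ℝ :=
  ρ / p * (p / ρ ^ γ) ^ (1 / (α + γ)) * v

/-- Third component of the entropy variables for Harten's entropy. -/
noncomputable def hartenW3 (γ α ρ v p : ℝ) : ℝ :=
  ρ / p * (p / ρ ^ γ) ^ (1 / (α + γ)) * (-1)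

/-- Flux potential associated with Harten's entropy. -/
noncomputable def hartenPsi (γ α ρ v p : ℝ) : ℝ :=
  ρ * (p / ρ ^ γ) ^ (1 / (α + γ)) * v

/-- Entropy conservation residual `⟦w⟧ ⬝ F - ⟦ψ⟧` of a numerical flux
`(Fρ, Fρv, Fρe)` at the pair of states `(ρm, vm, pm)`, `(ρp, vp, pp)`. -/
noncomputable def ecResidual (γ α ρm vm pm ρp vp pp Fρ Fρv Fρe : ℝ) : ℝ :=
  (hartenW1 γ α ρp vp pp - hartenW1 γ α ρm vm pm) * Fρ
    + (hartenW2 γ α ρp vp pp - hartenW2 γ α ρm vm pm) * Fρv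
    + (hartenW3 γ α ρp vp pp - hartenW3 γ α ρm vm pm) * Fρe
    - (hartenPsi γ α ρp vp pp - hartenPsi γ α ρm vm pm)

open Filter Real

/-- Auxiliary: a finite linear combination of real power functions that vanishes on
`(0, ∞)` must have vanishing coefficient on a strictly dominant exponent. -/
private lemma aux_dominated_sum_rpow {n : ℕ} (a e : Fin n → ℝ) (j : Fin n) (haj : a j ≠ 0)
    (he : ∀ i, i ≠ j → e i < e j)
    (h : ∀ x : ℝ, 0 < x → ∑ i, a i * x ^ (e i) = 0) : False := by
  have h2 : ∀ t : ℝ, ∑ i, a i * Real.exp ((e i - e j) * t) = 0 := by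
    intro t
    have h0 := h (Real.exp t) (Real.exp_pos t)
    have hrw : ∀ i : Fin n, a i * Real.exp ((e i - e j) * t)
        = Real.exp (-(e j * t)) * (a i * (Real.exp t) ^ (e i)) := by
      intro i
      rw [Real.rpow_def_of_pos (Real.exp_pos t), Real.log_exp,
        show (e i - e j) * t = -(e j * t) + t * e i by ring, Real.exp_add]
      ring
    calc ∑ i, a i * Real.exp ((e i - e j) * t)
        = Real.exp (-(e j * t)) * ∑ i, a i * (Real.exp t) ^ (e i) := by
          rw [Finset.mul_sum]; exact Finset.sum_congr rfl fun i _ => hrw i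
      _ = 0 := by rw [h0, mul_zero]
  have hlim : Tendsto (fun t : ℝ => ∑ i, a i * Real.exp ((e i - e j) * t))
      atTop (nhds (a j)) := by
    have : Tendsto (fun t : ℝ => ∑ i, a i * Real.exp ((e i - e j) * t))
        atTop (nhds (∑ i, if i = j then a j else 0)) := by
      refine tendsto_finset_sum _ fun i _ => ?_
      by_cases hij : i = j
      · subst hij
        simp only [if_pos rfl, sub_self, zero_mul, Real.exp_zero, mul_one]
        exact tendsto_const_nhds
      · simp only [if_neg hij]
        have h1 : Tendsto (fun t : ℝ => (e i - e j) * t) atTop atBot :=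
          (tendsto_const_mul_atBot_of_neg (by linarith [he i hij])).2 tendsto_id
        have := Real.tendsto_exp_comp_nhds_zero.2 h1
        simpa using this.const_mul (a i)
    simpa [Finset.sum_ite_eq'] using this
  have hlim0 : Tendsto (fun _ : ℝ => (0:ℝ)) atTop (nhds (a j)) :=
    hlim.congr fun t => h2 t
  exact haj (tendsto_nhds_unique hlim0 tendsto_const_nhds)

/-- Auxiliary: explicit six-term version of `aux_dominated_sum_rpow`, with the
dominant exponent listed first. -/
private lemma aux_dominated_six (a0 a1 a2 a3 a4 a5 e0 e1 e2 e3 e4 e5 : ℝ)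
    (ha : a0 ≠ 0) (h1 : e1 < e0) (h2 : e2 < e0) (h3 : e3 < e0) (h4 : e4 < e0)
    (h5 : e5 < e0)
    (h : ∀ x : ℝ, 0 < x → a0 * x ^ e0 + a1 * x ^ e1 + a2 * x ^ e2
      + a3 * x ^ e3 + a4 * x ^ e4 + a5 * x ^ e5 = 0) : False := by
  refine aux_dominated_sum_rpow (![a0, a1, a2, a3, a4, a5])
    (![e0, e1, e2, e3, e4, e5]) 0 ha ?_ ?_
  · intro i hi
    fin_cases i
    · simp at hi
    · exact h1
    · exact h2
    · exact h3
    · exact h4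
    · exact h5
  · intro x hx
    simpa [Fin.sum_univ_six, add_assoc] using h x hx

/-- **Main theorem.** There is no two-point numerical flux
`F = (Fρ, Fρv, Fρe)` (a function of the two states `(ρ₋, v₋, p₋)`,
`(ρ₊, v₊, p₊)`) that is consistent with the physical Euler flux, entropy
conservative for a member of Harten's one-parameter family of entropies,
pressure equilibrium preserving, and whose density component does not depend
on the pressures. -/

theorem no_harten_ec_pep_pressure_independent_density_flux (γ : ℝ) (hγ : 1 < γ) :
    ¬ ∃ (Fρ Fρv Fρe : ℝ → ℝ → ℝ → ℝ → ℝ → ℝ → ℝ) (α : ℝ),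
      (0 < α ∨ α < -γ) ∧
      -- (i) consistency with the physical flux `f(u) = (ρv, ρv² + p, (ρe + p)v)`
      (∀ ρ v p : ℝ, 0 < ρ → 0 < p →
        Fρ ρ v p ρ v p = ρ * v ∧
        Fρv ρ v p ρ v p = ρ * v ^ 2 + p ∧
        Fρe ρ v p ρ v p = (p / (γ - 1) + ρ * v ^ 2 / 2 + p) * v) ∧
      -- (ii) entropy conservation `⟦w⟧ ⬝ F - ⟦ψ⟧ = 0` for all pairs of states
      (∀ ρm vm pm ρp vp pp : ℝ, 0 < ρm → 0 < pm → 0 < ρp → 0 < pp →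
        ecResidual γ α ρm vm pm ρp vp pp
          (Fρ ρm vm pm ρp vp pp) (Fρv ρm vm pm ρp vp pp) (Fρe ρm vm pm ρp vp pp) = 0) ∧
      -- (iii) pressure equilibrium preservation
      (∃ c₁ c₂ : ℝ → ℝ → ℝ, ∀ ρm ρp v p : ℝ, 0 < ρm → 0 < ρp → 0 < p →
        Fρv ρm v p ρp v p = v * Fρ ρm v p ρp v p + c₁ p v ∧
        Fρe ρm v p ρp v p = 1 / 2 * v ^ 2 * Fρ ρm v p ρp v p + c₂ p v) ∧
      -- (iv) the density flux does not depend on the pressures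
      (∀ ρm vm pm ρp vp pp qm qp : ℝ,
        0 < ρm → 0 < ρp → 0 < pm → 0 < pp → 0 < qm → 0 < qp →
        Fρ ρm vm pm ρp vp pp = Fρ ρm vm qm ρp vp qp) := by

  rintro ⟨Fρ, Fρv, Fρe, α, hα, hcons, hec, ⟨c₁, c₂, hpep⟩, hind⟩
  have hγ1 : γ - 1 ≠ 0 := by linarith
  have hA : α + γ ≠ 0 := by rcases hα with h | h <;> [positivity; linarith]
  have hA1 : α + γ - 1 ≠ 0 := by rcases hα with h | h <;> nlinarith
  set b : ℝ := γ / (α + γ) with hb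
  set m : ℝ := α / (α + γ - 1) with hm
  -- values of c₁ c₂ at (1,1)
  obtain ⟨hcρ, hcρv, hcρe⟩ := hcons 1 1 1 one_pos one_pos
  obtain ⟨hp1, hp2⟩ := hpep 1 1 1 1 one_pos one_pos one_pos
  have hc1 : c₁ 1 1 = 1 := by rw [hcρv, hcρ] at hp1; linarith
  have hc2 : c₂ 1 1 = 1 / (γ - 1) + 1 := by rw [hcρe, hcρ] at hp2; field_simp at hp2 ⊢; linarith
  -- the key power identity, obtained from the pairs (1,1,1)-(x,1,1) and (1,1,1)-(x,1,x^m)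
  have hkey : ∀ x : ℝ, 0 < x →
      γ * (x ^ ((1:ℝ) - b) - 1) * (x ^ (m - 1) - 1)
        = (γ - 1) * (x ^ m - 1) * (x ^ (-b) - 1) := by
    intro x hx
    set F : ℝ := Fρ 1 1 1 x 1 1 with hF
    -- pair A : (1,1,1) -- (x,1,1)
    have hS : ((1:ℝ) / x ^ γ) ^ (1/(α+γ)) = x ^ (-b) := by
      rw [one_div, ← Real.rpow_neg hx.le, ← Real.rpow_mul hx.le]
      congr 1
      field_simp
      rw [hb]
      field_simp
    have hxS : x * x ^ (-b) = x ^ ((1:ℝ) - b) := by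
      rw [sub_eq_add_neg, Real.rpow_add hx, Real.rpow_one]
    have hEqA : α * (x ^ (-b) - 1) * F + γ * (x ^ ((1:ℝ)-b) - 1) = 0 := by
      have hres := hec 1 1 1 x 1 1 one_pos one_pos hx one_pos
      obtain ⟨hA1', hA2'⟩ := hpep 1 x 1 1 one_pos hx one_pos
      rw [hA1', hA2', hc1, hc2] at hres
      unfold ecResidual hartenW1 hartenW2 hartenW3 hartenPsi at hres
      rw [hS] at hres
      simp only [div_one, one_div_one, Real.one_rpow] at hres
      rw [← hxS]
      field_simp at hres
      have h8 : ((γ-1)^2 * (8*x)) ≠ 0 := by positivity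
      refine (mul_eq_zero.1 ?_).resolve_left h8
      rw [← hF] at hres
      linear_combination -(γ-1)^2*4*x*hres
    -- pair B : (1,1,1) -- (x,1,x^m)
    set q : ℝ := x ^ m with hq
    have hq0 : 0 < q := Real.rpow_pos_of_pos hx m
    have hT : (q / x ^ γ) ^ (1/(α+γ)) = x ^ (m - 1) := by
      rw [hq, ← Real.rpow_sub hx, ← Real.rpow_mul hx.le]
      congr 1
      rw [hm]
      field_simp
      ring
    have hxT : x * x ^ (m - 1) = q := by
      nth_rewrite 1 [← Real.rpow_one x]
      rw [← Real.rpow_add hx, hq]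
      congr 1
      ring
    have hFB : Fρ 1 1 1 x 1 q = F := by
      rw [hF]
      exact hind 1 1 1 x 1 q 1 1 one_pos hx one_pos hq0 one_pos one_pos
    have hk : x / q * x ^ (m-1) = 1 := by
      rw [div_mul_eq_mul_div, hxT, div_self (ne_of_gt hq0)]
    have hEqB : α * (x ^ (m-1) - 1) * F + (γ - 1) * (q - 1) = 0 := by
      have hres := hec 1 1 1 x 1 q one_pos one_pos hx hq0
      rw [hFB] at hres
      unfold ecResidual hartenW1 hartenW2 hartenW3 hartenPsi at hres
      rw [hT] at hres
      simp only [div_one, one_div_one, Real.one_rpow] at hres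
      rw [hk, hxT] at hres
      field_simp at hres
      have h8 : ((γ-1) * (4*x)) ≠ 0 := by positivity
      refine (mul_eq_zero.1 ?_).resolve_left h8
      linear_combination -2*(γ-1)*hres + 4*(γ-1)*α*F*hxT
    -- combine the two equations, eliminating F
    linear_combination (x ^ (m-1) - 1) * hEqA - (x ^ (-b) - 1) * hEqB
  -- rewrite the identity as a vanishing sum of six power functions
  have hx1 : ∀ x : ℝ, 0 < x → x ^ ((1:ℝ)-b) * x ^ (m-1) = x ^ (m-b) := by
    intro x hx
    rw [← Real.rpow_add hx]; congr 1; ring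
  have hx2 : ∀ x : ℝ, 0 < x → x ^ m * x ^ (-b) = x ^ (m-b) := by
    intro x hx
    rw [← Real.rpow_add hx, ← sub_eq_add_neg]
  -- a strictly dominant exponent with nonzero coefficient yields a contradiction
  rcases hα with hpos | hneg
  · -- α > 0 : the exponent m dominates
    have hb0 : 0 < b := div_pos (by linarith) (by linarith)
    have hb1 : b < 1 := (div_lt_one (by linarith)).2 (by linarith)
    have hm0 : 0 < m := div_pos hpos (by linarith)
    have hmb : 1 < m + b := by
      have h1 : m + b - 1 = α / ((α + γ - 1) * (α + γ)) := by
        rw [hm, hb]; field_simp; ring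
      have h2 : 0 < α / ((α + γ - 1) * (α + γ)) := div_pos hpos (by nlinarith)
      linarith
    refine aux_dominated_six (γ-1) 1 (-γ) (-γ) (γ-1) 1 m (m-b) (1-b) (m-1) (-b) 0
      (by linarith) (by linarith) (by linarith) (by linarith) (by linarith)
      (by linarith) ?_
    intro x hx
    linear_combination hkey x hx - γ * hx1 x hx + (γ-1) * hx2 x hx + Real.rpow_zero x
  · -- α < -γ : the exponent m - b dominates
    have hA' : α + γ < 0 := by linarith
    have hA1' : α + γ - 1 < 0 := by linarith
    have hb0 : b < 0 := div_neg_of_pos_of_neg (by linarith) hA'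
    have hm0 : 0 < m := div_pos_of_neg_of_neg (by linarith) hA1'
    have hm1 : 1 < m := by
      have h1 : m - 1 = (1 - γ) / (α + γ - 1) := by
        rw [hm]; field_simp; ring
      have h2 : 0 < (1 - γ) / (α + γ - 1) := div_pos_of_neg_of_neg (by linarith) hA1'
      linarith
    refine aux_dominated_six 1 (-γ) (-γ) (γ-1) (γ-1) 1 (m-b) (1-b) (m-1) m (-b) 0
      (by norm_num) (by linarith) (by linarith) (by linarith) (by linarith)
      (by linarith) ?_
    intro x hx
    linear_combination hkey x hx - γ * hx1 x hx + (γ-1) * hx2 x hx + Real.rpow_zero x
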